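/- Let Sh denote the quotient of {±1} × A_f^× by the action of ℚ^× given by q·(ε, l) = (sign(q)·ε, q·l), with classes written [ε, l], and let Y := Ẑ × Sh. Define a partially defined action of A_f^× on Y by g·(ρ, [ε, l]) := (g·ρ, [ε, l·g⁻¹]) whenever g·ρ ∈ Ẑ, and let ∼ be the equivalence relation on Y (commensurability) generated by y ∼ g·y for all such g. Let W := {m ∈ A_f : m = l·ρ for some l ∈ A_f^× and ρ ∈ Ẑ}, and let ℚ^× act on {±1} × W by q·(ε, m) = (sign(q)·ε, q·m). Then the map π sending (ρ, [ε, l]) ∈ Y to the class of (ε, l·ρ) in the quotient ℚ^×\({±1} × W) is well defined and induces a bijection from the set of commensurability classes Y/∼ onto ℚ^×\({±1} × W). -/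

import Mathlib

open IsDedekindDomain IsDedekindDomain.HeightOneSpectrum

noncomputable section

/-- The finite adele ring of ℚ. -/
abbrev Af : Type := FiniteAdeleRing ℤ ℚ

/-- A finite adele is integral if all its components are integral, i.e. it lies in Ẑ. -/
def IsIntegralAdele (x : Af) : Prop :=
  ∀ v : HeightOneSpectrum ℤ, x v ∈ v.adicCompletionIntegers ℚ

/-- The diagonal embedding of ℚ^× into the finite ideles. -/
def diagQ : ℚˣ →* Afˣ := Units.map (algebraMap ℚ Af).toMonoidHom

/-- The sign of a nonzero rational, as an element of {±1} = ℤˣ. -/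
def signQ (q : ℚˣ) : ℤˣ := if 0 < (q : ℚ) then 1 else -1

/-- The action of ℚ^× on {±1} × A_f^×: q·(ε, l) = (sign(q)·ε, q·l). -/
def relSh : (ℤˣ × Afˣ) → (ℤˣ × Afˣ) → Prop := fun p p' =>
  ∃ q : ℚˣ, p'.1 = signQ q * p.1 ∧ p'.2 = diagQ q * p.2

/-- Sh(𝔾_m, {±1}) = ℚ^×\({±1} × A_f^×). -/
def Sh : Type := Quot relSh

/-- Right multiplication by an idele on Sh(𝔾_m, {±1}). -/
def shMul (c : Afˣ) : Sh → Sh :=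
  Quot.lift (fun p => Quot.mk relSh (p.1, p.2 * c))
    (by
      rintro ⟨ε, l⟩ ⟨ε', l'⟩ ⟨q, h1, h2⟩
      exact Quot.sound ⟨q, h1, by rw [h2, mul_assoc]⟩)

/-- Y = Ẑ × Sh(𝔾_m, {±1}). -/
def Y : Type := {p : Af × Sh // IsIntegralAdele p.1}

/-- The commensurability relation on Y, generated by the partially defined action of A_f^×:
g·(ρ, [ε, l]) = (g·ρ, [ε, l·g⁻¹]) whenever g·ρ ∈ Ẑ. -/
def relY : Y → Y → Prop := fun p q => ∃ g : Afˣ,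
  IsIntegralAdele ((g : Af) * p.1.1) ∧
  q.1.1 = (g : Af) * p.1.1 ∧ q.1.2 = shMul g⁻¹ p.1.2

/-- W = {m ∈ A_f : m = l·ρ with l ∈ A_f^× and ρ ∈ Ẑ}. -/
def W : Type := {m : Af // ∃ l : Afˣ, ∃ ρ : Af, IsIntegralAdele ρ ∧ m = (l : Af) * ρ}

/-- The action of ℚ^× on {±1} × W: q·(ε, m) = (sign(q)·ε, q·m). -/
def relW : (ℤˣ × W) → (ℤˣ × W) → Prop := fun p q =>
  ∃ r : ℚˣ, q.1 = signQ r * p.1 ∧ q.2.1 = algebraMap ℚ Af (r : ℚ) * p.2.1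

/-- The commensurability class map π : Y → ℚ^×\({±1} × W), (ρ, [ε, l]) ↦ [ε, l·ρ]. -/
def commClassMap (p : Y) : Quot relW :=
  Quot.lift
    (fun s : ℤˣ × Afˣ =>
      Quot.mk relW (s.1, ⟨(s.2 : Af) * p.1.1, s.2, p.1.1, p.2, rfl⟩))
    (by
      rintro ⟨ε, l⟩ ⟨ε', l'⟩ ⟨q, h1, h2⟩
      refine Quot.sound ⟨q, h1, ?_⟩
      show (l' : Af) * p.1.1 = algebraMap ℚ Af (q : ℚ) * ((l : Af) * p.1.1)
      rw [show l' = diagQ q * l from h2, Units.val_mul, mul_assoc]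
      rfl)
    p.1.2

lemma signQ_one : signQ 1 = 1 := by simp [signQ]

lemma signQ_inv (q : ℚˣ) : signQ q⁻¹ = signQ q := by
  simp only [signQ, Units.val_inv_eq_inv_val, inv_pos]

lemma signQ_sq (q : ℚˣ) : signQ q * signQ q = 1 := by
  unfold signQ; split <;> simp

lemma signQ_mul (a b : ℚˣ) : signQ (a * b) = signQ a * signQ b := by
  have ha := a.ne_zero
  have hb := b.ne_zero
  unfold signQ
  by_cases h1 : 0 < (a : ℚ) <;> by_cases h2 : 0 < (b : ℚ) <;>
    simp only [h1, h2, if_true, if_false, Units.val_mul, one_mul, mul_one] <;>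
    [skip; skip; skip; skip]
  · simp [mul_pos h1 h2]
  · have : (b : ℚ) < 0 := lt_of_le_of_ne (not_lt.1 h2) hb
    simp [not_lt.2 (le_of_lt (mul_neg_of_pos_of_neg h1 this))]
  · have : (a : ℚ) < 0 := lt_of_le_of_ne (not_lt.1 h1) ha
    have := mul_neg_of_neg_of_pos this h2
    simp [not_lt.2 (le_of_lt this)]
  · have ha' : (a : ℚ) < 0 := lt_of_le_of_ne (not_lt.1 h1) ha
    have hb' : (b : ℚ) < 0 := lt_of_le_of_ne (not_lt.1 h2) hb
    simp [mul_pos_of_neg_of_neg ha' hb']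

lemma relW_equiv : Equivalence relW := by
  constructor
  · intro p
    exact ⟨1, by simp [signQ_one], by simp⟩
  · rintro p q ⟨r, h1, h2⟩
    refine ⟨r⁻¹, ?_, ?_⟩
    · rw [signQ_inv, h1, ← mul_assoc, signQ_sq, one_mul]
    · rw [h2, ← mul_assoc, Units.val_inv_eq_inv_val, ← map_mul, inv_mul_cancel₀ r.ne_zero,
        map_one, one_mul]
  · rintro p q s ⟨r, h1, h2⟩ ⟨r', h1', h2'⟩
    refine ⟨r' * r, ?_, ?_⟩
    · rw [h1', h1, signQ_mul, mul_assoc]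
    · rw [h2', h2, Units.val_mul, map_mul, mul_assoc]

lemma diagQ_val (q : ℚˣ) : ((diagQ q : Afˣ) : Af) = algebraMap ℚ Af (q : ℚ) := rfl

/-- The commensurability class map π is well defined and induces a bijection from the set
of commensurability classes Y/∼ onto ℚ^×\({±1} × W). -/
theorem commClassMap_bijective_on_classes :
    ∃ P : Quot relY → Quot relW,
      Function.Bijective P ∧ ∀ y : Y, P (Quot.mk relY y) = commClassMap y := by
  have hresp : ∀ y₁ y₂ : Y, relY y₁ y₂ → commClassMap y₁ = commClassMap y₂ := by
    rintro ⟨⟨ρ₁, s₁⟩, hρ₁⟩ ⟨⟨ρ₂, s₂⟩, hρ₂⟩ ⟨g, hg, hmul, hsh⟩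
    dsimp at hg hmul hsh
    subst hmul hsh
    induction s₁ using Quot.ind with
    | mk p =>
      obtain ⟨ε, l⟩ := p
      show Quot.mk relW (ε, ⟨(l : Af) * ρ₁, _⟩) =
        Quot.mk relW (ε, ⟨((l * g⁻¹ : Afˣ) : Af) * ((g : Af) * ρ₁), _⟩)
      congr 1
      refine Prod.ext rfl (Subtype.ext ?_)
      show (l : Af) * ρ₁ = ((l * g⁻¹ : Afˣ) : Af) * ((g : Af) * ρ₁)
      rw [Units.val_mul, mul_assoc, ← mul_assoc ((g⁻¹ : Afˣ) : Af), ← Units.val_mul,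
        inv_mul_cancel, Units.val_one, one_mul]
  refine ⟨Quot.lift commClassMap hresp, ⟨?_, ?_⟩, fun y => rfl⟩
  · -- injective
    intro a b
    induction a using Quot.ind with
    | mk y₁ =>
    induction b using Quot.ind with
    | mk y₂ =>
      obtain ⟨⟨ρ₁, s₁⟩, hρ₁⟩ := y₁
      obtain ⟨⟨ρ₂, s₂⟩, hρ₂⟩ := y₂
      induction s₁ using Quot.ind with
      | mk p₁ =>
      induction s₂ using Quot.ind with
      | mk p₂ =>
        obtain ⟨ε₁, l₁⟩ := p₁
        obtain ⟨ε₂, l₂⟩ := p₂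
        intro h
        have h' : relW (ε₁, ⟨(l₁ : Af) * ρ₁, l₁, ρ₁, hρ₁, rfl⟩)
            (ε₂, ⟨(l₂ : Af) * ρ₂, l₂, ρ₂, hρ₂, rfl⟩) :=
          relW_equiv.eqvGen_iff.mp (Quot.eqvGen_exact h)
        obtain ⟨r, h1, h2⟩ := h'
        dsimp at h1 h2
        -- rewrite the second class using q = r
        have hsh : Quot.mk relSh (ε₁, (diagQ r)⁻¹ * l₂) = Quot.mk relSh (ε₂, l₂) :=
          Quot.sound ⟨r, by rw [h1], by rw [← mul_assoc, mul_inv_cancel, one_mul]⟩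
        have key : (((diagQ r)⁻¹ * l₂ : Afˣ) : Af) * ρ₂ = (l₁ : Af) * ρ₁ := by
          rw [Units.val_mul, mul_assoc, h2, ← mul_assoc, ← diagQ_val, ← Units.val_mul,
            inv_mul_cancel, Units.val_one, one_mul]
        set l₂' : Afˣ := (diagQ r)⁻¹ * l₂ with hl₂'
        have step : relY ⟨(ρ₁, Quot.mk relSh (ε₁, l₁)), hρ₁⟩
            ⟨(ρ₂, Quot.mk relSh (ε₁, l₂')), hρ₂⟩ := by
          refine ⟨l₂'⁻¹ * l₁, ?_, ?_, ?_⟩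
          · show IsIntegralAdele (((l₂'⁻¹ * l₁ : Afˣ) : Af) * ρ₁)
            have : ((l₂'⁻¹ * l₁ : Afˣ) : Af) * ρ₁ = ρ₂ := by
              rw [Units.val_mul, mul_assoc, ← key, ← mul_assoc, ← Units.val_mul,
                inv_mul_cancel, Units.val_one, one_mul]
            rw [this]; exact hρ₂
          · show ρ₂ = ((l₂'⁻¹ * l₁ : Afˣ) : Af) * ρ₁
            rw [Units.val_mul, mul_assoc, ← key, ← mul_assoc, ← Units.val_mul,
              inv_mul_cancel, Units.val_one, one_mul]
          · show Quot.mk relSh (ε₁, l₂') = shMul (l₂'⁻¹ * l₁)⁻¹ (Quot.mk relSh (ε₁, l₁))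
            show Quot.mk relSh (ε₁, l₂') = Quot.mk relSh (ε₁, l₁ * (l₂'⁻¹ * l₁)⁻¹)
            congr 1
            rw [mul_inv, inv_inv, ← mul_assoc, mul_comm l₁ l₂', mul_assoc,
              mul_inv_cancel, mul_one]
        calc Quot.mk relY (⟨(ρ₁, Quot.mk relSh (ε₁, l₁)), hρ₁⟩ : Y)
            = Quot.mk relY ⟨(ρ₂, Quot.mk relSh (ε₁, l₂')), hρ₂⟩ := Quot.sound step
          _ = Quot.mk relY ⟨(ρ₂, Quot.mk relSh (ε₂, l₂)), hρ₂⟩ := by rw [hsh]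
  · -- surjective
    intro w
    induction w using Quot.ind with
    | mk p =>
      obtain ⟨ε, m, l, ρ, hρ, hm⟩ := p
      refine ⟨Quot.mk relY ⟨(ρ, Quot.mk relSh (ε, l)), hρ⟩, ?_⟩
      show Quot.mk relW (ε, ⟨(l : Af) * ρ, _⟩) = Quot.mk relW (ε, ⟨m, _⟩)
      congr 1
      exact Prod.ext rfl (Subtype.ext hm.symm)
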